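/- The bases of the parametric matroid M_X are exactly the sets of the form I ∪ R̲(X) where for every equivalence class P of R with P ⊄ R̲(X), |P ∩ I| = |P| − 1. -/
import Mathlib


open Finset

variable {α : Type*} [Fintype α] [DecidableEq α]

/-- The lower approximation of `S` w.r.t. the equivalence relation `R`:
`{x : [x]_R ⊆ S}`. -/
def lowerApprox (R : Setoid α) [DecidableRel R.r] (S : Finset α) : Finset α :=
  Finset.univ.filter fun x => ∀ y, R.r x y → y ∈ S


/-- The equivalence class of `x` w.r.t. `R`, as a finset. -/
def cls (R : Setoid α) [DecidableRel R.r] (x : α) : Finset α :=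
  Finset.univ.filter fun y => R.r x y

lemma mem_lowerApprox (R : Setoid α) [DecidableRel R.r] {S : Finset α} {x : α} :
    x ∈ lowerApprox R S ↔ ∀ y, R.r x y → y ∈ S := by
  simp [lowerApprox]

lemma mem_cls (R : Setoid α) [DecidableRel R.r] {x y : α} :
    y ∈ cls R x ↔ R.r x y := by simp [cls]

lemma mem_cls_self (R : Setoid α) [DecidableRel R.r] (x : α) : x ∈ cls R x :=
  (mem_cls R).2 (R.refl x)

lemma cls_eq (R : Setoid α) [DecidableRel R.r] {x y : α} (h : R.r x y) :
    cls R x = cls R y := by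
  ext z
  simp only [mem_cls]
  exact ⟨fun hz => R.trans (R.symm h) hz, fun hz => R.trans h hz⟩

lemma lowerApprox_classInv (R : Setoid α) [DecidableRel R.r] {S : Finset α} {x y : α}
    (h : R.r x y) (hx : x ∈ lowerApprox R S) : y ∈ lowerApprox R S := by
  rw [mem_lowerApprox] at hx ⊢
  exact fun z hz => hx z (R.trans h hz)

lemma lowerApprox_subset (R : Setoid α) [DecidableRel R.r] (S : Finset α) :
    lowerApprox R S ⊆ S :=
  fun x hx => (mem_lowerApprox R).1 hx x (R.refl x)

lemma cls_subset_of_mem_lower (R : Setoid α) [DecidableRel R.r] {S : Finset α} {x : α}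
    (hx : x ∈ lowerApprox R S) : cls R x ⊆ lowerApprox R S :=
  fun y hy => lowerApprox_classInv R ((mem_cls R).1 hy) hx

lemma cls_subset_lower (R : Setoid α) [DecidableRel R.r] {X : Finset α} {x : α}
    (h : cls R x ⊆ X) : cls R x ⊆ lowerApprox R X := by
  intro y hy
  rw [mem_lowerApprox]
  intro z hz
  exact h ((mem_cls R).2 (R.trans ((mem_cls R).1 hy) hz))

theorem bases_of_parametric_matroid (R : Setoid α) [DecidableRel R.r] (X : Finset α) :
    ∀ B : Finset α,
      (lowerApprox R B ⊆ X ∧ ∀ I : Finset α, lowerApprox R I ⊆ X → B ⊆ I → B = I) ↔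
      ∃ I : Finset α, B = I ∪ lowerApprox R X ∧
        ∀ x : α, ¬ cls R x ⊆ lowerApprox R X → (cls R x ∩ I).card = (cls R x).card - 1 := by
  intro B
  set L := lowerApprox R X with hL
  constructor
  · rintro ⟨hind, hmax⟩
    have hLB : L ⊆ B := by
      have h1 : lowerApprox R (B ∪ L) ⊆ X := by
        intro x hx
        rw [mem_lowerApprox] at hx
        by_cases hc : ∃ y ∈ cls R x, y ∈ L
        · obtain ⟨y, hy, hyL⟩ := hc
          have hcl : cls R x ⊆ L := by
            rw [cls_eq R ((mem_cls R).1 hy)]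
            exact cls_subset_of_mem_lower R hyL
          exact lowerApprox_subset R X (hcl (mem_cls_self R x))
        · push_neg at hc
          have : x ∈ lowerApprox R B := by
            rw [mem_lowerApprox]
            intro y hy
            rcases Finset.mem_union.1 (hx y hy) with h | h
            · exact h
            · exact absurd h (hc y ((mem_cls R).2 hy))
          exact hind this
      have h2 := hmax (B ∪ L) h1 Finset.subset_union_left
      intro y hy
      rw [h2]
      exact Finset.mem_union_right _ hy
    refine ⟨B \ L, ?_, ?_⟩
    · ext y
      simp only [Finset.mem_union, Finset.mem_sdiff]
      constructor
      · intro h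
        by_cases hyL : y ∈ L
        · exact Or.inr hyL
        · exact Or.inl ⟨h, hyL⟩
      · rintro (⟨h, _⟩ | h)
        · exact h
        · exact hLB h
    · intro x hx
      have hdisj : ∀ y ∈ cls R x, y ∉ L := by
        intro y hy hyL
        exact hx (by rw [cls_eq R ((mem_cls R).1 hy)]; exact cls_subset_of_mem_lower R hyL)
      have hinterB : cls R x ∩ (B \ L) = cls R x ∩ B := by
        ext y
        simp only [Finset.mem_inter, Finset.mem_sdiff]
        constructor
        · rintro ⟨h1, h2, _⟩; exact ⟨h1, h2⟩
        · rintro ⟨h1, h2⟩; exact ⟨h1, h2, hdisj y h1⟩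
      rw [hinterB]
      have hmiss : ∃ x0 ∈ cls R x, x0 ∉ B := by
        by_contra h
        push_neg at h
        have hxB : ∀ y ∈ cls R x, y ∈ lowerApprox R B := by
          intro y hy
          rw [mem_lowerApprox]
          intro z hz
          exact h z ((mem_cls R).2 (R.trans ((mem_cls R).1 hy) hz))
        exact hx (cls_subset_lower R (fun y hy => hind (hxB y hy)))
      obtain ⟨x0, hx0c, hx0B⟩ := hmiss
      have huniq : ∀ y ∈ cls R x, y ∉ B → y = x0 := by
        intro y hyc hyB
        by_contra hne
        have hind' : lowerApprox R (insert x0 B) ⊆ X := by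
          intro z hz
          rw [mem_lowerApprox] at hz
          by_cases hzB : ∀ w, R.r z w → w ∈ B
          · exact hind ((mem_lowerApprox R).2 hzB)
          · push_neg at hzB
            obtain ⟨w, hzw, hwB⟩ := hzB
            have hwx0 : w = x0 := by
              rcases Finset.mem_insert.1 (hz w hzw) with h | h
              · exact h
              · exact absurd h hwB
            subst hwx0
            have hzy : R.r z y :=
              R.trans hzw (R.trans (R.symm ((mem_cls R).1 hx0c)) ((mem_cls R).1 hyc))
            rcases Finset.mem_insert.1 (hz y hzy) with h | h
            · exact absurd h hne
            · exact absurd h hyB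
        have h2 := hmax (insert x0 B) hind' (Finset.subset_insert _ _)
        exact hx0B (h2 ▸ Finset.mem_insert_self x0 B)
      have heq : cls R x ∩ B = cls R x \ {x0} := by
        ext y
        simp only [Finset.mem_inter, Finset.mem_sdiff, Finset.mem_singleton]
        constructor
        · rintro ⟨h1, h2⟩
          refine ⟨h1, fun he => ?_⟩
          subst he
          exact hx0B h2
        · rintro ⟨h1, h2⟩
          refine ⟨h1, ?_⟩
          by_contra h3
          exact h2 (huniq y h1 h3)
      rw [heq, Finset.card_sdiff_of_subset (Finset.singleton_subset_iff.2 hx0c), Finset.card_singleton]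
  · rintro ⟨I, hBI, hcard⟩
    have hclsL : ∀ {x : α}, ¬ cls R x ⊆ L → ∀ y ∈ cls R x, y ∉ L := by
      intro x hx y hy hyL
      exact hx (by rw [cls_eq R ((mem_cls R).1 hy)]; exact cls_subset_of_mem_lower R hyL)
    constructor
    · intro z hz
      rw [mem_lowerApprox] at hz
      by_cases hc : cls R z ⊆ L
      · exact lowerApprox_subset R X (hc (mem_cls_self R z))
      · exfalso
        have h1 := hcard z hc
        have hlt : (cls R z ∩ I).card < (cls R z).card := by
          rw [h1]
          exact Nat.sub_lt (Finset.card_pos.2 ⟨z, mem_cls_self R z⟩) one_pos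
        obtain ⟨w, hwc, hwI⟩ : ∃ w ∈ cls R z, w ∉ I := by
          by_contra h
          push_neg at h
          have hsub : cls R z ⊆ cls R z ∩ I := fun w hw => Finset.mem_inter.2 ⟨hw, h w hw⟩
          exact absurd (Finset.card_le_card hsub) (by omega)
        have hwB : w ∈ B := hz w ((mem_cls R).1 hwc)
        rw [hBI] at hwB
        rcases Finset.mem_union.1 hwB with h | h
        · exact hwI h
        · exact hclsL hc w hwc h
    · intro I' hI' hBI'
      by_contra hne
      obtain ⟨x, hxI', hxB⟩ : ∃ x ∈ I', x ∉ B := by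
        by_contra h
        push_neg at h
        exact hne (Finset.Subset.antisymm hBI' h)
      have hxL : x ∉ L := fun h => hxB (hBI ▸ Finset.mem_union_right _ h)
      have hxI : x ∉ I := fun h => hxB (hBI ▸ Finset.mem_union_left _ h)
      have hcx : ¬ cls R x ⊆ L := fun h => hxL (h (mem_cls_self R x))
      have h1 := hcard x hcx
      have hsub : cls R x ∩ I ⊆ cls R x \ {x} := by
        intro y hy
        rw [Finset.mem_inter] at hy
        rw [Finset.mem_sdiff, Finset.mem_singleton]
        exact ⟨hy.1, fun he => hxI (he ▸ hy.2)⟩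
      have heq : cls R x ∩ I = cls R x \ {x} :=
        Finset.eq_of_subset_of_card_le hsub (by
          rw [Finset.card_sdiff_of_subset (Finset.singleton_subset_iff.2 (mem_cls_self R x)),
            Finset.card_singleton, h1])
      have hclsI' : cls R x ⊆ I' := by
        intro y hy
        by_cases hyx : y = x
        · rw [hyx]; exact hxI'
        · have hyI : y ∈ cls R x ∩ I := by
            rw [heq, Finset.mem_sdiff, Finset.mem_singleton]
            exact ⟨hy, hyx⟩
          apply hBI'
          rw [hBI]
          exact Finset.mem_union_left _ (Finset.mem_inter.1 hyI).2
      apply hxL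
      rw [hL, mem_lowerApprox]
      intro y hxy
      apply hI'
      rw [mem_lowerApprox]
      intro z hyz
      exact hclsI' ((mem_cls R).2 (R.trans hxy hyz))
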